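/- Fix 0 < r ≤ 1 and let k = ⌊1/r⌋ and c_r = ((k+1)r − 1)/k and d_r = 1/⌈1/c_r⌉. Then for all sufficiently large n, Q(n, ⌈rn⌉) ≥ d_r · ω(n,k). -/

import Mathlib

open SimpleGraph

/-- The independence number of a graph: clique number of the complement. -/
noncomputable def indepNum {V : Type*} (G : SimpleGraph V) : ℕ := Gᶜ.cliqueNum

/-- The chromatic number of a graph, as a natural number. -/
noncomputable def chi {V : Type*} (G : SimpleGraph V) : ℕ := G.chromaticNumber.toNat

/-- The inverse Ramsey number ω(n,k): minimum clique number over graphs on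
`n` vertices with independence number at most `k`. -/
noncomputable def invRamsey (n k : ℕ) : ℕ :=
  sInf {w | ∃ G : SimpleGraph (Fin n), _root_.indepNum G ≤ k ∧ G.cliqueNum = w}

/-- Q(n,c): minimum clique number over graphs on `n` vertices with chromatic number `c`. -/
noncomputable def Q (n c : ℕ) : ℕ :=
  sInf {w | ∃ G : SimpleGraph (Fin n), chi G = c ∧ G.cliqueNum = w}

open Finset

section Aux

lemma cliqueNum_le_of_forall' {α : Type*} (G : SimpleGraph α) (b : ℕ)
    (h : ∀ s : Finset α, G.IsClique ↑s → s.card ≤ b) : G.cliqueNum ≤ b := by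
  apply csSup_le'
  rintro w ⟨s, hs⟩
  exact hs.card_eq ▸ h s hs.isClique

lemma cliqueNum_mono' {α : Type*} [Fintype α] {G G' : SimpleGraph α} (h : G ≤ G') :
    G.cliqueNum ≤ G'.cliqueNum :=
  cliqueNum_le_of_forall' _ _ fun _ hs => (hs.mono h).card_le_cliqueNum

lemma cliqueNum_comap_le' {n n' : ℕ} (f : Fin n' → Fin n) (hf : Function.Injective f)
    (G : SimpleGraph (Fin n)) : (G.comap f).cliqueNum ≤ G.cliqueNum := by
  apply cliqueNum_le_of_forall'
  intro s hs
  have himg : G.IsClique ↑(s.image f) := by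
    rw [Finset.coe_image]
    rintro a ⟨u, hu, rfl⟩ b ⟨v, hv, rfl⟩ hab
    exact hs hu hv (fun h => hab (by rw [h]))
  calc s.card = (s.image f).card := (Finset.card_image_of_injective s hf).symm
    _ ≤ G.cliqueNum := himg.card_le_cliqueNum

lemma indepNum_comap_le' {n n' : ℕ} (f : Fin n' → Fin n) (hf : Function.Injective f)
    (G : SimpleGraph (Fin n)) : _root_.indepNum (G.comap f) ≤ _root_.indepNum G := by
  unfold _root_.indepNum
  have hle : (G.comap f)ᶜ ≤ Gᶜ.comap f := by
    intro u v huv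
    rcases huv with ⟨hne, hnadj⟩
    exact ⟨fun h => hne (hf h), hnadj⟩
  calc (G.comap f)ᶜ.cliqueNum ≤ (Gᶜ.comap f).cliqueNum := cliqueNum_mono' hle
    _ ≤ Gᶜ.cliqueNum := cliqueNum_comap_le' f hf Gᶜ

lemma chi_colorable' {V : Type*} [Fintype V] (G : SimpleGraph V) : G.Colorable (chi G) :=
  G.colorable_chromaticNumber_of_fintype

lemma chromaticNumber_eq_chi' {V : Type*} [Fintype V] (G : SimpleGraph V) :
    G.chromaticNumber = (chi G : ℕ∞) := by
  have h : G.chromaticNumber ≠ ⊤ :=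
    (lt_of_le_of_lt G.colorable_of_fintype.chromaticNumber_le (WithTop.coe_lt_top _)).ne
  exact (ENat.coe_toNat h).symm

lemma chi_le_of_colorable' {V : Type*} [Fintype V] {G : SimpleGraph V} {t : ℕ}
    (h : G.Colorable t) : chi G ≤ t := by
  have := h.chromaticNumber_le
  rw [chromaticNumber_eq_chi'] at this
  exact_mod_cast this

lemma clique_card_le_chi' {V : Type*} [Fintype V] {G : SimpleGraph V} {s : Finset V}
    (h : G.IsClique ↑s) : s.card ≤ chi G :=
  h.card_le_of_colorable (chi_colorable' G)

lemma chi_le_card' {V : Type*} [Fintype V] (G : SimpleGraph V) : chi G ≤ Fintype.card V :=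
  chi_le_of_colorable' G.colorable_of_fintype

lemma chi_induce_le_card' {n : ℕ} (G : SimpleGraph (Fin n)) (S : Finset (Fin n)) :
    chi (G.induce (↑S : Set (Fin n))) ≤ S.card := by
  calc chi (G.induce (↑S : Set (Fin n))) ≤ Fintype.card ↥(↑S : Set (Fin n)) := chi_le_card' _
    _ = S.card := by simp

lemma chi_induce_univ' {n : ℕ} (G : SimpleGraph (Fin n)) :
    chi (G.induce (↑(univ : Finset (Fin n)) : Set (Fin n))) = chi G := by
  rw [Finset.coe_univ]
  unfold chi
  rw [le_antisymm (chromaticNumber_mono_of_hom (induceUnivIso G).toHom)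
    (chromaticNumber_mono_of_hom (induceUnivIso G).symm.toHom)]

/-- Greedy extraction of an induced subgraph with small independence number. -/
lemma extract' {n : ℕ} (k : ℕ) (G : SimpleGraph (Fin n)) :
    ∀ m : ℕ, ∀ S : Finset (Fin n), S.card ≤ m → ∃ T ⊆ S,
      (∀ I : Finset (Fin n), I ⊆ T → Gᶜ.IsClique ↑I → I.card ≤ k) ∧
      (k + 1) * chi (G.induce (↑S : Set (Fin n))) ≤ k * T.card + S.card := by
  intro m
  induction m with
  | zero =>
    intro S hS
    refine ⟨S, subset_rfl, ?_, ?_⟩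
    · intro I hI _
      calc I.card ≤ S.card := card_le_card hI
        _ ≤ k := by omega
    · have := chi_induce_le_card' G S
      nlinarith
  | succ m ih =>
    intro S hS
    by_cases hok : ∀ I : Finset (Fin n), I ⊆ S → Gᶜ.IsClique ↑I → I.card ≤ k
    · refine ⟨S, subset_rfl, hok, ?_⟩
      have := chi_induce_le_card' G S
      nlinarith
    · push_neg at hok
      obtain ⟨I, hIS, hIc, hIk⟩ := hok
      obtain ⟨J, hJI, hJcard⟩ := exists_subset_card_eq (show k + 1 ≤ I.card by omega)
      have hJc : Gᶜ.IsClique ↑J := hIc.subset (coe_subset.mpr hJI)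
      have hJS : J ⊆ S := hJI.trans hIS
      set S' := S \ J with hS'
      have hkS : k + 1 ≤ S.card := hJcard ▸ card_le_card hJS
      have hS'card : S'.card = S.card - (k + 1) := by rw [hS', card_sdiff_of_subset hJS, hJcard]
      obtain ⟨T, hTS', hTind, hTbound⟩ := ih S' (by omega)
      refine ⟨T, hTS'.trans sdiff_subset, hTind, ?_⟩
      have hchi : chi (G.induce (↑S : Set (Fin n))) ≤ chi (G.induce (↑S' : Set (Fin n))) + 1 := by
        apply chi_le_of_colorable'
        obtain ⟨C⟩ := chi_colorable' (G.induce (↑S' : Set (Fin n)))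
        set t := chi (G.induce (↑S' : Set (Fin n))) with ht
        refine ⟨Coloring.mk
          (fun v => if h : v.1 ∈ S' then (C ⟨v.1, by simpa using h⟩).castSucc else Fin.last t) ?_⟩
        rintro u v huv
        have hG : G.Adj u.1 v.1 := huv
        by_cases hu : u.1 ∈ S' <;> by_cases hv : v.1 ∈ S' <;> simp only [hu, hv, dif_pos, dif_neg,
          not_false_iff]
        · intro hcc
          have hadj : (G.induce (↑S' : Set (Fin n))).Adj ⟨u.1, by simpa using hu⟩
              ⟨v.1, by simpa using hv⟩ := hG
          exact C.valid hadj (Fin.castSucc_injective _ hcc)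
        · exact (Fin.castSucc_lt_last _).ne
        · exact (Fin.castSucc_lt_last _).ne'
        · exfalso
          have hu' : u.1 ∈ J := by
            have : u.1 ∈ S := by simpa using u.2
            simp only [hS', mem_sdiff] at hu ⊢
            tauto
          have hv' : v.1 ∈ J := by
            have : v.1 ∈ S := by simpa using v.2
            simp only [hS', mem_sdiff] at hv ⊢
            tauto
          exact (hJc hu' hv' hG.ne).2 hG
      have h1 : (k + 1) * chi (G.induce (↑S : Set (Fin n))) ≤
          (k + 1) * chi (G.induce (↑S' : Set (Fin n))) + (k + 1) := by
        calc (k + 1) * chi (G.induce (↑S : Set (Fin n)))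
            ≤ (k + 1) * (chi (G.induce (↑S' : Set (Fin n))) + 1) := Nat.mul_le_mul_left _ hchi
          _ = _ := by ring
      omega

/-- There is a graph on `Fin n` with chromatic number exactly `c`, for `1 ≤ c ≤ n`. -/
lemma exists_chi_eq' (n c : ℕ) (h1 : 1 ≤ c) (h2 : c ≤ n) :
    ∃ G : SimpleGraph (Fin n), chi G = c := by
  let K : SimpleGraph (Fin n) :=
    { Adj := fun u v => u ≠ v ∧ u.1 < c ∧ v.1 < c
      symm := ⟨by rintro u v ⟨h, hu, hv⟩; exact ⟨h.symm, hv, hu⟩⟩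
      loopless := ⟨by rintro u ⟨h, -⟩; exact h rfl⟩ }
  refine ⟨K, le_antisymm ?_ ?_⟩
  · apply chi_le_of_colorable'
    refine ⟨Coloring.mk (fun u => ⟨if u.1 < c then u.1 else 0, by split <;> omega⟩) ?_⟩
    rintro u v ⟨hne, hu, hv⟩ hcol
    simp only [hu, hv, if_pos, Fin.mk.injEq] at hcol
    exact hne (Fin.ext hcol)
  · have hclique : K.IsClique ↑(Finset.univ.map (Fin.castLEEmb h2)) := by
      rintro a ha b hb hab
      simp only [coe_map, Set.mem_image, mem_coe, mem_univ] at ha hb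
      obtain ⟨i, -, rfl⟩ := ha
      obtain ⟨j, -, rfl⟩ := hb
      exact ⟨hab, by simp, by simp⟩
    have := clique_card_le_chi' hclique
    simpa using this

lemma invRamsey_set_nonempty' (n k : ℕ) (hk : 1 ≤ k) :
    {w | ∃ G : SimpleGraph (Fin n), _root_.indepNum G ≤ k ∧ G.cliqueNum = w}.Nonempty := by
  refine ⟨(⊤ : SimpleGraph (Fin n)).cliqueNum, ⊤, ?_, rfl⟩
  unfold _root_.indepNum
  apply le_trans (cliqueNum_le_of_forall' _ 1 ?_) hk
  intro s hs
  rw [Finset.card_le_one]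
  intro a ha b hb
  by_contra hab
  exact (hs ha hb hab).2 hab

/-- Blow-up (join of copies) construction: `invRamsey n k ≤ m * invRamsey n' k`. -/
lemma invRamsey_le_mul' {n n' k m : ℕ} (hn' : 0 < n') (hk : 1 ≤ k) (hnm : n ≤ m * n') :
    invRamsey n k ≤ m * invRamsey n' k := by
  obtain ⟨H, hHind, hHcl⟩ := Nat.sInf_mem (invRamsey_set_nonempty' n' k hk)
  set φ : Fin n → Fin n' := fun u => ⟨u.1 % n', Nat.mod_lt _ hn'⟩ with hφ
  let GJ : SimpleGraph (Fin n) :=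
    { Adj := fun u v => u ≠ v ∧ (u.1 / n' ≠ v.1 / n' ∨ H.Adj (φ u) (φ v))
      symm := ⟨by
        rintro u v ⟨h1, h2⟩
        exact ⟨h1.symm, by tauto⟩⟩
      loopless := ⟨by rintro u ⟨h, -⟩; exact h rfl⟩ }
  have hGJadj : ∀ u v : Fin n, GJ.Adj u v ↔
      u ≠ v ∧ (u.1 / n' ≠ v.1 / n' ∨ H.Adj (φ u) (φ v)) := fun u v => Iff.rfl
  have hφeq : ∀ u v : Fin n, u.1 / n' = v.1 / n' → φ u = φ v → u = v := by
    intro u v hdiv hmod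
    have hm : u.1 % n' = v.1 % n' := congrArg Fin.val hmod
    have hu := Nat.div_add_mod u.1 n'
    have hv := Nat.div_add_mod v.1 n'
    rw [hdiv] at hu
    apply Fin.ext
    omega
  have key1 : _root_.indepNum GJ ≤ k := by
    unfold _root_.indepNum
    apply cliqueNum_le_of_forall' _ _ ?_
    intro s hs
    have hprop : ∀ u ∈ s, ∀ v ∈ s, u ≠ v → u.1 / n' = v.1 / n' ∧ ¬H.Adj (φ u) (φ v) := by
      intro u hu v hv huv
      have := hs (Finset.mem_coe.mpr hu) (Finset.mem_coe.mpr hv) huv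
      rw [compl_adj] at this
      obtain ⟨-, hnadj⟩ := this
      rw [hGJadj] at hnadj
      push_neg at hnadj
      exact hnadj huv
    have hinj : Set.InjOn φ ↑s := by
      intro u hu v hv hmod
      by_contra huv
      exact huv (hφeq u v (hprop u hu v hv huv).1 hmod)
    have himg : Hᶜ.IsClique ↑(s.image φ) := by
      rw [Finset.coe_image]
      rintro a ⟨u, hu, rfl⟩ b ⟨v, hv, rfl⟩ hab
      have huv : u ≠ v := fun h => hab (by rw [h])
      rw [compl_adj]
      exact ⟨hab, (hprop u (Finset.mem_coe.mp hu) v (Finset.mem_coe.mp hv) huv).2⟩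
    calc s.card = (s.image φ).card := (Finset.card_image_of_injOn hinj).symm
      _ ≤ Hᶜ.cliqueNum := himg.card_le_cliqueNum
      _ ≤ k := hHind
  have key2 : GJ.cliqueNum ≤ m * H.cliqueNum := by
    apply cliqueNum_le_of_forall'
    intro s hs
    have hmem : ∀ u ∈ s, u.1 / n' ∈ Finset.range m := by
      intro u _
      rw [Finset.mem_range]
      exact Nat.div_lt_of_lt_mul (lt_of_lt_of_le u.2 (by rw [mul_comm] at hnm; exact hnm))
    rw [Finset.card_eq_sum_card_fiberwise hmem]
    have hbound : ∀ b ∈ Finset.range m,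
        (s.filter (fun u => u.1 / n' = b)).card ≤ H.cliqueNum := by
      intro b _
      set t := s.filter (fun u => u.1 / n' = b) with htdef
      have hadj : ∀ u ∈ t, ∀ v ∈ t, u ≠ v → H.Adj (φ u) (φ v) := by
        intro u hu v hv huv
        rw [htdef, Finset.mem_filter] at hu hv
        have := hs (Finset.mem_coe.mpr hu.1) (Finset.mem_coe.mpr hv.1) huv
        rw [hGJadj] at this
        rcases this.2 with h | h
        · exact absurd (hu.2.trans hv.2.symm) h
        · exact h
      have hinj : Set.InjOn φ ↑t := by
        intro u hu v hv hmod
        by_contra huv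
        exact (hadj u (Finset.mem_coe.mp hu) v (Finset.mem_coe.mp hv) huv).ne (by rw [hmod])
      have himg : H.IsClique ↑(t.image φ) := by
        rw [Finset.coe_image]
        rintro a ⟨u, hu, rfl⟩ b' ⟨v, hv, rfl⟩ hab
        exact hadj u (Finset.mem_coe.mp hu) v (Finset.mem_coe.mp hv) (fun h => hab (by rw [h]))
      calc t.card = (t.image φ).card := (Finset.card_image_of_injOn hinj).symm
        _ ≤ H.cliqueNum := himg.card_le_cliqueNum
    calc ∑ b ∈ Finset.range m, (s.filter (fun u => u.1 / n' = b)).card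
        ≤ (Finset.range m).card • H.cliqueNum := Finset.sum_le_card_nsmul _ _ _ hbound
      _ = m * H.cliqueNum := by simp [smul_eq_mul]
  calc invRamsey n k ≤ GJ.cliqueNum := Nat.sInf_le ⟨GJ, key1, rfl⟩
    _ ≤ m * H.cliqueNum := key2
    _ = m * invRamsey n' k := by rw [hHcl]; rfl

end Aux

theorem stmt_12 (r : ℝ) (hr0 : 0 < r) (hr1 : r ≤ 1) (k : ℕ) (hk : k = ⌊1 / r⌋₊)
    (c : ℝ) (hc : c = ((k + 1) * r - 1) / k)
    (d : ℝ) (hd : d = 1 / (⌈1 / c⌉₊ : ℝ)) :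
    ∃ N : ℕ, ∀ n ≥ N, d * (invRamsey n k : ℝ) ≤ (Q n ⌈r * n⌉₊ : ℝ) := by
  have hk1 : 1 ≤ k := by
    rw [hk]
    apply Nat.le_floor
    rw [Nat.cast_one, le_div_iff₀ hr0]
    linarith
  have hk0 : (0 : ℝ) < k := by exact_mod_cast hk1
  have hrk : 1 / r < (k : ℝ) + 1 := by
    rw [hk]
    exact_mod_cast Nat.lt_floor_add_one (1 / r)
  have hkr1 : 1 < ((k : ℝ) + 1) * r := by
    rw [div_lt_iff₀ hr0] at hrk
    linarith
  have hcpos : 0 < c := by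
    rw [hc]
    exact div_pos (by linarith) hk0
  set m := ⌈1 / c⌉₊ with hmdef
  have hm1 : 1 ≤ m := Nat.ceil_pos.mpr (by positivity)
  have hm0 : (0 : ℝ) < m := by exact_mod_cast hm1
  refine ⟨1, fun n hn => ?_⟩
  have hn1 : (1 : ℝ) ≤ (n : ℝ) := by exact_mod_cast hn
  set cc := ⌈r * (n : ℝ)⌉₊ with hccdef
  have hcc1 : 1 ≤ cc := Nat.ceil_pos.mpr (by positivity)
  have hccn : cc ≤ n := Nat.ceil_le.mpr (by nlinarith)
  obtain ⟨Gc, hGc⟩ := exists_chi_eq' n cc hcc1 hccn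
  have hQne : {w | ∃ G : SimpleGraph (Fin n), chi G = cc ∧ G.cliqueNum = w}.Nonempty :=
    ⟨Gc.cliqueNum, Gc, hGc, rfl⟩
  obtain ⟨G₀, hG₀chi, hG₀cl⟩ := Nat.sInf_mem hQne
  have hQ : Q n cc = sInf {w | ∃ G : SimpleGraph (Fin n), chi G = cc ∧ G.cliqueNum = w} := rfl
  obtain ⟨T, hTuniv, hTind, hTb⟩ := extract' k G₀ n Finset.univ (by simp)
  rw [chi_induce_univ', hG₀chi, Finset.card_univ, Fintype.card_fin] at hTb
  have hcT : c * n ≤ (T.card : ℝ) := by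
    have h2 : ((k : ℝ) + 1) * cc ≤ k * T.card + n := by exact_mod_cast hTb
    have h1 : ((k : ℝ) + 1) * (r * n) ≤ ((k : ℝ) + 1) * cc :=
      mul_le_mul_of_nonneg_left (Nat.le_ceil _) (by positivity)
    rw [hc, div_mul_eq_mul_div, div_le_iff₀ hk0]
    nlinarith
  set n' := ⌈c * (n : ℝ)⌉₊ with hn'def
  have hn'T : n' ≤ T.card := Nat.ceil_le.mpr hcT
  have hn'pos : 0 < n' := Nat.ceil_pos.mpr (by positivity)
  let e := T.orderEmbOfFin (rfl : T.card = T.card)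
  let f : Fin n' → Fin n := fun i => e (Fin.castLE hn'T i)
  have hfinj : Function.Injective f := fun a b hfab =>
    Fin.castLE_injective _ (e.injective hfab)
  have hfT : ∀ i, f i ∈ T := fun i => Finset.orderEmbOfFin_mem T rfl _
  have hIR1 : invRamsey n' k ≤ (G₀.comap f).cliqueNum := by
    apply Nat.sInf_le
    refine ⟨G₀.comap f, ?_, rfl⟩
    unfold _root_.indepNum
    apply cliqueNum_le_of_forall'
    intro s hs
    have himg : G₀ᶜ.IsClique ↑(s.image f) := by
      rw [Finset.coe_image]
      rintro a ⟨u, hu, rfl⟩ b ⟨v, hv, rfl⟩ hab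
      have huv : u ≠ v := fun h => hab (by rw [h])
      have hadj := hs (Finset.mem_coe.mpr (Finset.mem_coe.mp hu))
        (Finset.mem_coe.mpr (Finset.mem_coe.mp hv)) huv
      rw [compl_adj] at hadj
      exact ⟨hab, hadj.2⟩
    have hsub : s.image f ⊆ T := by
      intro x hx
      obtain ⟨i, -, rfl⟩ := Finset.mem_image.mp hx
      exact hfT i
    calc s.card = (s.image f).card := (Finset.card_image_of_injective s hfinj).symm
      _ ≤ k := hTind _ hsub himg
  have hIR2 : invRamsey n' k ≤ Q n cc := by
    calc invRamsey n' k ≤ (G₀.comap f).cliqueNum := hIR1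
      _ ≤ G₀.cliqueNum := cliqueNum_comap_le' f hfinj G₀
      _ = Q n cc := by rw [hQ, hG₀cl]
  have hnm : n ≤ m * n' := by
    have hmc : 1 / c ≤ (m : ℝ) := Nat.le_ceil _
    have hcn' : c * n ≤ (n' : ℝ) := Nat.le_ceil _
    have hreal : (n : ℝ) ≤ (m : ℝ) * (n' : ℝ) := by
      have h0 : (n : ℝ) = (1 / c) * (c * n) := by field_simp
      rw [h0]
      exact mul_le_mul hmc hcn' (by positivity) (by positivity)
    exact_mod_cast hreal
  have hmain : invRamsey n k ≤ m * Q n cc :=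
    le_trans (invRamsey_le_mul' hn'pos hk1 hnm) (Nat.mul_le_mul_left m hIR2)
  have hRcast : (invRamsey n k : ℝ) ≤ (m : ℝ) * (Q n cc : ℝ) := by exact_mod_cast hmain
  rw [hd]
  rw [div_mul_eq_mul_div, one_mul, div_le_iff₀ hm0]
  calc (invRamsey n k : ℝ) ≤ (m : ℝ) * (Q n cc : ℝ) := hRcast
    _ = (Q n cc : ℝ) * (m : ℝ) := by ring
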